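/- Let A be a positive compact operator on an infinite-dimensional separable Hilbert space, let R be a self-adjoint finite-rank operator such that A + R is positive, and let s > 0. If lim_{j→∞} j^{s} λ_j(A) = L (where λ_j denotes the nonincreasing eigenvalue sequence of a positive compact operator, counted with multiplicity), then lim_{j→∞} j^{s} λ_j(A + R) = L. -/

import Mathlib

open Filter

/-- The `j`-th singular value of an operator, via the min-max (approximation number)
characterization: `μ_j(T) = inf { ‖T - R‖ : rank R ≤ j }`. For a positive compact operator
on a Hilbert space this is the `(j+1)`-th eigenvalue `λ_j` (counted with multiplicity,
arranged nonincreasingly). -/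
noncomputable def singularValue {H : Type*} [NormedAddCommGroup H] [InnerProductSpace ℂ H]
    (T : H →L[ℂ] H) (j : ℕ) : ℝ :=
  sInf {c : ℝ | ∃ R : H →L[ℂ] H, LinearMap.rank (R : H →ₗ[ℂ] H) ≤ (j : Cardinal) ∧ c = ‖T - R‖}

section Aux

variable {H : Type*} [NormedAddCommGroup H] [InnerProductSpace ℂ H]

lemma singularValue_set_nonempty (T : H →L[ℂ] H) (j : ℕ) :
    {c : ℝ | ∃ R : H →L[ℂ] H, LinearMap.rank (R : H →ₗ[ℂ] H) ≤ (j : Cardinal) ∧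
      c = ‖T - R‖}.Nonempty :=
  ⟨‖T‖, 0, by simp [LinearMap.rank], by simp⟩

lemma singularValue_set_bddBelow (T : H →L[ℂ] H) (j : ℕ) :
    BddBelow {c : ℝ | ∃ R : H →L[ℂ] H, LinearMap.rank (R : H →ₗ[ℂ] H) ≤ (j : Cardinal) ∧
      c = ‖T - R‖} := by
  refine ⟨0, ?_⟩
  rintro c ⟨S, -, rfl⟩
  positivity

/-- Shift inequality: perturbing by an operator of rank at most `N` shifts the
approximation numbers by at most `N`. -/
lemma singularValue_add_le (T P : H →L[ℂ] H) (N j : ℕ)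
    (hP : LinearMap.rank (P : H →ₗ[ℂ] H) ≤ (N : Cardinal)) :
    singularValue (T + P) (j + N) ≤ singularValue T j := by
  apply le_csInf (singularValue_set_nonempty T j)
  rintro c ⟨S, hS, rfl⟩
  apply csInf_le (singularValue_set_bddBelow _ _)
  refine ⟨S + P, ?_, ?_⟩
  · have h1 : LinearMap.rank ((S + P : H →L[ℂ] H) : H →ₗ[ℂ] H) ≤
        LinearMap.rank (S : H →ₗ[ℂ] H) + LinearMap.rank (P : H →ₗ[ℂ] H) := by
      simpa using LinearMap.rank_add_le (S : H →ₗ[ℂ] H) (P : H →ₗ[ℂ] H)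
    calc LinearMap.rank ((S + P : H →L[ℂ] H) : H →ₗ[ℂ] H)
        ≤ LinearMap.rank (S : H →ₗ[ℂ] H) + LinearMap.rank (P : H →ₗ[ℂ] H) := h1
      _ ≤ (j : Cardinal) + (N : Cardinal) := add_le_add hS hP
      _ = ((j + N : ℕ) : Cardinal) := by push_cast; ring
  · congr 1
    abel

/-- The key limit transfer lemma: if `j^s * a j → L`, then `(j+c)^s * a (j+d) → L`. -/
lemma key_limit (a : ℕ → ℝ) (s L : ℝ) (c d : ℕ)
    (h : Tendsto (fun j : ℕ => (j : ℝ) ^ s * a j) atTop (nhds L)) :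
    Tendsto (fun k : ℕ => ((k : ℝ) + c) ^ s * a (k + d)) atTop (nhds L) := by
  have h2 : Tendsto (fun k : ℕ => ((k : ℝ) + d) ^ s * a (k + d)) atTop (nhds L) := by
    have := (Filter.tendsto_add_atTop_iff_nat (f := fun j : ℕ => (j : ℝ) ^ s * a j)
      (l := nhds L) d).mpr h
    refine this.congr fun k => ?_
    push_cast
    ring_nf
  -- ratio tends to 1
  have hratio : Tendsto (fun k : ℕ => (((k : ℝ) + c) / ((k : ℝ) + d)) ^ s) atTop (nhds 1) := by
    have hbase : Tendsto (fun k : ℕ => ((k : ℝ) + c) / ((k : ℝ) + d)) atTop (nhds 1) := by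
      have hz : Tendsto (fun k : ℕ => ((c : ℝ) - d) / ((k : ℝ) + d)) atTop (nhds 0) :=
        Filter.Tendsto.div_atTop tendsto_const_nhds
          (tendsto_atTop_add_const_right _ _ tendsto_natCast_atTop_atTop)
      have : Tendsto (fun k : ℕ => 1 + ((c : ℝ) - d) / ((k : ℝ) + d)) atTop (nhds 1) := by
        simpa using hz.const_add 1
      refine this.congr' ?_
      filter_upwards [eventually_ge_atTop 1] with k hk
      have hk' : (0 : ℝ) < (k : ℝ) + d := by
        have : (1 : ℝ) ≤ (k : ℝ) := by exact_mod_cast hk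
        positivity
      field_simp
      ring
    have := hbase.rpow_const (p := s) (Or.inl one_ne_zero)
    simpa using this
  have := hratio.mul h2
  rw [one_mul] at this
  refine this.congr' ?_
  filter_upwards [eventually_ge_atTop 1] with k hk
  have hk1 : (1 : ℝ) ≤ (k : ℝ) := by exact_mod_cast hk
  have hd : (0 : ℝ) < (k : ℝ) + d := by positivity
  have hcn : (0 : ℝ) ≤ (k : ℝ) + c := by positivity
  have hds : (0 : ℝ) < ((k : ℝ) + d) ^ s := Real.rpow_pos_of_pos hd s
  rw [Real.div_rpow hcn hd.le]
  field_simp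

end Aux

theorem eigenvalue_asymptotics_finite_rank_perturbation
    {H : Type*} [NormedAddCommGroup H] [InnerProductSpace ℂ H] [CompleteSpace H]
    [TopologicalSpace.SeparableSpace H] (hinf : ¬ FiniteDimensional ℂ H)
    (A R : H →L[ℂ] H) (hA : IsCompactOperator A) (hApos : A.IsPositive)
    (hRsa : IsSelfAdjoint R) (hRrank : LinearMap.rank (R : H →ₗ[ℂ] H) < Cardinal.aleph0)
    (hARpos : (A + R).IsPositive) (s : ℝ) (hs : 0 < s) (L : ℝ)
    (hL : Tendsto (fun j : ℕ => (j : ℝ) ^ s * singularValue A j) atTop (nhds L)) :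
    Tendsto (fun j : ℕ => (j : ℝ) ^ s * singularValue (A + R) j) atTop (nhds L) := by
  obtain ⟨N, hN⟩ := Cardinal.lt_aleph0.mp hRrank
  have hR_le : LinearMap.rank (R : H →ₗ[ℂ] H) ≤ (N : Cardinal) := hN.le
  have hnegR_le : LinearMap.rank ((-R : H →L[ℂ] H) : H →ₗ[ℂ] H) ≤ (N : Cardinal) := by
    have hco : ((-R : H →L[ℂ] H) : H →ₗ[ℂ] H) = -(R : H →ₗ[ℂ] H) := rfl
    rw [hco, LinearMap.rank, LinearMap.range_neg]
    exact hR_le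
  -- sandwich inequalities
  have hup : ∀ j : ℕ, singularValue (A + R) (j + N) ≤ singularValue A j :=
    fun j => singularValue_add_le A R N j hR_le
  have hlo : ∀ j : ℕ, singularValue A (j + N) ≤ singularValue (A + R) j := by
    intro j
    have := singularValue_add_le (A + R) (-R) N j hnegR_le
    simpa using this
  rw [← Filter.tendsto_add_atTop_iff_nat
    (f := fun j : ℕ => (j : ℝ) ^ s * singularValue (A + R) j) N]
  -- squeeze for k ↦ ((k+N):ℝ)^s * μ_{k+N}(A+R)
  have hlow : Tendsto (fun k : ℕ => ((k : ℝ) + N) ^ s * singularValue A (k + (N + N)))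
      atTop (nhds L) := key_limit (singularValue A) s L N (N + N) hL
  have hhigh : Tendsto (fun k : ℕ => ((k : ℝ) + N) ^ s * singularValue A (k + 0))
      atTop (nhds L) := key_limit (singularValue A) s L N 0 hL
  refine tendsto_of_tendsto_of_tendsto_of_le_of_le hlow hhigh ?_ ?_
  · intro k
    have hmono : singularValue A (k + (N + N)) ≤ singularValue (A + R) (k + N) := by
      have := hlo (k + N)
      simpa [add_assoc] using this
    have hnn : (0 : ℝ) ≤ ((k : ℝ) + N) ^ s := by positivity
    have hc : (((k + N : ℕ)) : ℝ) = (k : ℝ) + N := by push_cast; ring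
    simp only [hc]
    exact mul_le_mul_of_nonneg_left hmono hnn
  · intro k
    have hmono : singularValue (A + R) (k + N) ≤ singularValue A k := hup k
    have hnn : (0 : ℝ) ≤ ((k : ℝ) + N) ^ s := by positivity
    have hc : (((k + N : ℕ)) : ℝ) = (k : ℝ) + N := by push_cast; ring
    simp only [hc, Nat.add_zero]
    exact mul_le_mul_of_nonneg_left hmono hnn
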